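/- Let τ, σ > 0, φ, ψ > 0, γ̃ ≥ 0, and κ ∈ (0,1) satisfy η := φτ = ψσ and κ ≥ τσ‖K‖²/(1 + 2γ̃σ). Set ψ⁺ := ψ(1 + 2γ̃σ) and ε := 1 − τσ‖K‖²/(κ(1 + 2γ̃σ)). Then ε ≥ 0, and for all x ∈ X and y ∈ Y: φ‖x‖² + ψ⁺‖y‖² − 2η⟨Kx, y⟩ ≥ φ(1 − κ)‖x‖² + ψ⁺ε‖y‖² ≥ 0. -/

import Mathlib

local notation "⟪" x ", " y "⟫" => @inner ℝ _ _ x y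

/-- Lower bound for the tested preconditioning operator `Z_k M_k`: with
`η = φτ = ψσ`, `ψ⁺ = ψ(1 + 2γ̃σ)` and `ε = 1 - τσ‖K‖²/(κ(1 + 2γ̃σ))`, one has
`ε ≥ 0` and `φ‖x‖² + ψ⁺‖y‖² - 2η⟪Kx, y⟫ ≥ φ(1-κ)‖x‖² + ψ⁺ε‖y‖² ≥ 0`. -/
theorem zm_lower_bound
    {X Y : Type*}
    [NormedAddCommGroup X] [InnerProductSpace ℝ X]
    [NormedAddCommGroup Y] [InnerProductSpace ℝ Y]
    (K : X →L[ℝ] Y) (τ σ φ ψ γt κ η : ℝ)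
    (hτ : 0 < τ) (hσ : 0 < σ) (hφ : 0 < φ) (hψ : 0 < ψ) (hγt : 0 ≤ γt)
    (hκ0 : 0 < κ) (hκ1 : κ < 1)
    (hη : η = φ * τ) (hη' : φ * τ = ψ * σ)
    (hκ : κ ≥ τ * σ * ‖K‖ ^ 2 / (1 + 2 * γt * σ)) :
    (0 : ℝ) ≤ 1 - τ * σ * ‖K‖ ^ 2 / (κ * (1 + 2 * γt * σ)) ∧
    ∀ (x : X) (y : Y),
      φ * (1 - κ) * ‖x‖ ^ 2
          + ψ * (1 + 2 * γt * σ) * (1 - τ * σ * ‖K‖ ^ 2 / (κ * (1 + 2 * γt * σ)))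
            * ‖y‖ ^ 2
        ≤ φ * ‖x‖ ^ 2 + ψ * (1 + 2 * γt * σ) * ‖y‖ ^ 2 - 2 * η * ⟪K x, y⟫ ∧
      (0 : ℝ) ≤ φ * (1 - κ) * ‖x‖ ^ 2
          + ψ * (1 + 2 * γt * σ) * (1 - τ * σ * ‖K‖ ^ 2 / (κ * (1 + 2 * γt * σ)))
            * ‖y‖ ^ 2 := by

  have hD : (0:ℝ) < 1 + 2 * γt * σ := by positivity
  have hKn : (0:ℝ) ≤ ‖K‖ := norm_nonneg _
  have hκD : τ * σ * ‖K‖ ^ 2 ≤ κ * (1 + 2 * γt * σ) := by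
    have := (div_le_iff₀ hD).mp hκ
    linarith
  have hε : (0:ℝ) ≤ 1 - τ * σ * ‖K‖ ^ 2 / (κ * (1 + 2 * γt * σ)) := by
    have hpos : (0:ℝ) < κ * (1 + 2 * γt * σ) := by positivity
    have h1 : τ * σ * ‖K‖ ^ 2 / (κ * (1 + 2 * γt * σ)) ≤ 1 :=
      (div_le_one hpos).mpr hκD
    linarith
  refine ⟨hε, fun x y => ?_⟩
  have hψε : ψ * (1 + 2 * γt * σ) * (1 - τ * σ * ‖K‖ ^ 2 / (κ * (1 + 2 * γt * σ)))
      = ψ * (1 + 2 * γt * σ) - ψ * τ * σ * ‖K‖ ^ 2 / κ := by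
    field_simp
  constructor
  · -- main inequality
    have hip : ⟪K x, y⟫ ≤ ‖K‖ * ‖x‖ * ‖y‖ := by
      calc ⟪K x, y⟫ ≤ ‖K x‖ * ‖y‖ := real_inner_le_norm _ _
        _ ≤ ‖K‖ * ‖x‖ * ‖y‖ := by
            have := K.le_opNorm x
            nlinarith [norm_nonneg y, norm_nonneg (K x)]
    have hηpos : 0 < η := by rw [hη]; positivity
    have hη2 : η ^ 2 = φ * τ * (ψ * σ) := by rw [hη, hη']; ring
    rw [hψε]
    -- suffices: 2 η ⟪Kx,y⟫ ≤ φ κ ‖x‖² + ψ τ σ ‖K‖² / κ ‖y‖²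
    have key : 2 * η * ⟪K x, y⟫ ≤ φ * κ * ‖x‖ ^ 2 + ψ * τ * σ * ‖K‖ ^ 2 / κ * ‖y‖ ^ 2 := by
      have h2 : 2 * η * ⟪K x, y⟫ ≤ 2 * η * (‖K‖ * ‖x‖ * ‖y‖) := by
        nlinarith
      have hsq : 0 ≤ (φ * κ * ‖x‖ - η * ‖K‖ * ‖y‖) ^ 2 := sq_nonneg _
      rw [← sub_nonneg]
      have hκφ : (0:ℝ) < φ * κ := by positivity
      have expand : φ * κ * ‖x‖ ^ 2 + ψ * τ * σ * ‖K‖ ^ 2 / κ * ‖y‖ ^ 2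
          - 2 * η * (‖K‖ * ‖x‖ * ‖y‖)
          = (φ * κ * ‖x‖ - η * ‖K‖ * ‖y‖) ^ 2 / (φ * κ) := by
        field_simp
        linear_combination (-(‖K‖ ^ 2 * ‖y‖ ^ 2)) * hη2
      have h3 := div_nonneg hsq (le_of_lt hκφ)
      linarith [expand.ge, expand.le]
    linarith
  · have h1 : 0 ≤ φ * (1 - κ) * ‖x‖ ^ 2 := by
      have : (0:ℝ) ≤ 1 - κ := by linarith
      positivity
    have h2 : 0 ≤ ψ * (1 + 2 * γt * σ) * (1 - τ * σ * ‖K‖ ^ 2 / (κ * (1 + 2 * γt * σ)))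
        * ‖y‖ ^ 2 := by positivity
    linarith
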